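/- arXiv:2106.10347 — 2 statements merged into one kernel-verified Lean document; each statement's English description precedes it below -/
import Mathlib

section
/- Let h > 0, v1 > 0, v2 > 0 satisfy h·v1 < 1 and h·v2 < 1, let β1 ∈ (0,1], c1 ≥ 0, λ0 ≥ 0, and 0 < x_low < x̄2, and assume the fill condition c1 + λ0 > h·v2·x̄2/β1. Define x1(0) = 0, x1(k+1) = x1(k) + c1 + λ0 − h·v1·x1(k), x2(0) = x_low, and x2(k+1) = x2(k) + h·(β1·v1·x1(k) − v2·x2(k)). Then there exists a natural number T_R such that x2(T_R) ≥ x̄2. -/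
/-- Under the CFL conditions h·v1 < 1 and h·v2 < 1 and the fill
condition c1 + λ0 > h·v2·x̄2/β1, the worst-case recovery dynamics started at
x1(0) = 0, x2(0) = x_low reach x2(T_R) ≥ x̄2 in finitely many timesteps. -/
theorem recovery_reaches_congestion_threshold
    (h v1 v2 β1 c1 lam0 x_low x_bar2 : ℝ) (x1 x2 : ℕ → ℝ)
    (hh : 0 < h) (hv1 : 0 < v1) (hv2 : 0 < v2)
    (hCFL1 : h * v1 < 1) (hCFL2 : h * v2 < 1)
    (hβ1 : 0 < β1) (hβ1' : β1 ≤ 1)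
    (hc1 : 0 ≤ c1) (hlam0 : 0 ≤ lam0)
    (hx_low : 0 < x_low) (hx_bar2 : x_low < x_bar2)
    (hfill : c1 + lam0 > h * v2 * x_bar2 / β1)
    (hx1_0 : x1 0 = 0)
    (hx1_rec : ∀ k, x1 (k + 1) = x1 k + c1 + lam0 - h * v1 * x1 k)
    (hx2_0 : x2 0 = x_low)
    (hx2_rec : ∀ k, x2 (k + 1) = x2 k + h * (β1 * v1 * x1 k - v2 * x2 k)) :
    ∃ T_R : ℕ, x2 T_R ≥ x_bar2 := by
  by_contra hcon
  push_neg at hcon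
  -- closed form for x1
  set r : ℝ := 1 - h * v1 with hr
  clear_value r
  have hr0 : 0 ≤ r := by rw [hr]; linarith
  have hr1 : r < 1 := by rw [hr]; nlinarith
  have hhv1 : 0 < h * v1 := by positivity
  set A : ℝ := (c1 + lam0) / (h * v1) with hA
  clear_value A
  have hx1form : ∀ k, x1 k = A * (1 - r ^ k) := by
    intro k
    induction k with
    | zero => simp [hx1_0]
    | succ n ih =>
      have hhv : h * v1 = 1 - r := by rw [hr]; ring
      rw [hx1_rec n, ih, hhv, pow_succ]
      have hmul : A * (1 - r) = c1 + lam0 := by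
        rw [← hhv, hA]; exact div_mul_cancel₀ _ (ne_of_gt hhv1)
      linear_combination -hmul
  have hxb2pos : 0 < x_bar2 := lt_trans hx_low hx_bar2
  set S : ℝ := β1 * (c1 + lam0) / h with hSdef
  clear_value S
  have hS : v2 * x_bar2 < S := by
    rw [hSdef]
    rw [gt_iff_lt, div_lt_iff₀ hβ1] at hfill
    rw [lt_div_iff₀ hh]
    nlinarith
  have hSpos : 0 < S := lt_trans (mul_pos hv2 hxb2pos) hS
  have hq : 0 < (S - v2 * x_bar2) / S := div_pos (by linarith) hSpos
  obtain ⟨K, hK⟩ := exists_pow_lt_of_lt_one hq hr1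
  -- δ : positive growth margin
  have hSA : S = β1 * v1 * A := by
    rw [hSdef, hA]; field_simp
  have hApos : 0 < A := by
    have hcl : 0 < c1 + lam0 := by
      have : 0 < h * v2 * x_bar2 / β1 := by positivity
      linarith
    rw [hA]; exact div_pos hcl hhv1
  have key : ∀ k, K ≤ k → v2 * x_bar2 + S * ((S - v2 * x_bar2) / S - r ^ K) ≤ β1 * v1 * x1 k := by
    intro k hk
    have hrk : r ^ k ≤ r ^ K := pow_le_pow_of_le_one hr0 (le_of_lt hr1) hk
    have : β1 * v1 * x1 k = S * (1 - r ^ k) := by rw [hx1form k, hSA]; ring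
    rw [this]
    have hq1 : S * (1 - (S - v2 * x_bar2) / S) = v2 * x_bar2 := by
      field_simp
      ring
    nlinarith [mul_le_mul_of_nonneg_left hrk (le_of_lt hSpos)]
  set δ : ℝ := S * ((S - v2 * x_bar2) / S - r ^ K) with hδdef
  have hδpos : 0 < δ := mul_pos hSpos (by linarith [hK])
  clear_value δ
  -- growth of x2 after K
  have grow : ∀ n : ℕ, x2 K + n * (h * δ) ≤ x2 (K + n) := by
    intro n
    induction n with
    | zero => simp
    | succ m ih =>
      have hlt : x2 (K + m) < x_bar2 := hcon (K + m)
      have hkey := key (K + m) (Nat.le_add_right K m)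
      have hrec := hx2_rec (K + m)
      have : x2 (K + m) + h * δ ≤ x2 (K + m + 1) := by
        rw [hrec]
        have : v2 * x2 (K + m) ≤ v2 * x_bar2 := by nlinarith
        nlinarith
      have : x2 K + m * (h * δ) + h * δ ≤ x2 (K + m + 1) := by linarith
      calc x2 K + (↑(m + 1) : ℝ) * (h * δ) = x2 K + m * (h * δ) + h * δ := by
            push_cast; ring
        _ ≤ x2 (K + (m + 1)) := by rw [← Nat.add_assoc]; exact this
  obtain ⟨n, hn⟩ := exists_nat_gt ((x_bar2 - x2 K) / (h * δ))
  have hhd : 0 < h * δ := by positivity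
  have : x_bar2 - x2 K < n * (h * δ) := by
    rw [div_lt_iff₀ hhd] at hn
    linarith
  have := grow n
  have := hcon (K + n)
  linarith
end

section
/- Let E_hyst, E_convex, Ē_d, Ē_r be real numbers with E_hyst > E_convex, Ē_d ≥ 0, Ē_r ≥ 0, let T_D, T_R be natural numbers with N = (T_D + T_R)·E_convex − (T_D·Ē_d + T_R·Ē_r) ≥ 0, and set T_S = ⌈N/(E_hyst − E_convex)⌉. Let e : ℕ → ℝ be a sequence satisfying (i) the sum of e(k) for k < T_D is at least T_D·Ē_d, (ii) the sum of e(k) for T_D ≤ k < T_D + T_R is at least T_R·Ē_r, and (iii) e(k) ≥ E_hyst for all k ≥ T_D + T_R. Then for every natural number T ≥ T_D + T_R + T_S, the sum of e(k) over k < T is at least T·E_convex. -/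
/-- If the exits sequence e satisfies the average lower bounds
during decongestion (first T_D steps) and recovery (next T_R steps), and
e(k) ≥ E_hyst thereafter, then for every T ≥ T_D + T_R + T_S the cumulative
exits over T steps are at least T·E_convex, where
T_S = ⌈((T_D + T_R)·E_convex − (T_D·Ē_d + T_R·Ē_r))/(E_hyst − E_convex)⌉. -/
theorem cumulative_exits_beat_convex
    (E_hyst E_convex E_d_bar E_r_bar N : ℝ) (T_D T_R : ℕ) (e : ℕ → ℝ)
    (hE : E_hyst > E_convex) (hEd : 0 ≤ E_d_bar) (hEr : 0 ≤ E_r_bar)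
    (hN : N = ((T_D : ℝ) + (T_R : ℝ)) * E_convex -
      ((T_D : ℝ) * E_d_bar + (T_R : ℝ) * E_r_bar))
    (hN0 : 0 ≤ N)
    (hdecon : ∑ k ∈ Finset.range T_D, e k ≥ (T_D : ℝ) * E_d_bar)
    (hrecov : ∑ k ∈ Finset.Ico T_D (T_D + T_R), e k ≥ (T_R : ℝ) * E_r_bar)
    (hsteady : ∀ k, T_D + T_R ≤ k → e k ≥ E_hyst) :
    ∀ T : ℕ, T_D + T_R + ⌈N / (E_hyst - E_convex)⌉₊ ≤ T →
      ∑ k ∈ Finset.range T, e k ≥ (T : ℝ) * E_convex := by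
  intro T hT
  have hpos : (0:ℝ) < E_hyst - E_convex := by linarith
  have h1 : T_D + T_R ≤ T := le_trans (Nat.le_add_right _ _) hT
  have hsplit : ∑ k ∈ Finset.range T, e k
      = ∑ k ∈ Finset.range T_D, e k + ∑ k ∈ Finset.Ico T_D (T_D + T_R), e k
        + ∑ k ∈ Finset.Ico (T_D + T_R) T, e k := by
    rw [Finset.range_eq_Ico, ← Finset.sum_Ico_consecutive e (Nat.zero_le T_D)
      (le_trans (Nat.le_add_right _ _) h1),
      ← Finset.sum_Ico_consecutive e (Nat.le_add_right T_D T_R) h1,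
      add_assoc, Finset.range_eq_Ico]
  have htail : ∑ k ∈ Finset.Ico (T_D + T_R) T, e k ≥ ((T - (T_D + T_R) : ℕ) : ℝ) * E_hyst := by
    calc ∑ k ∈ Finset.Ico (T_D + T_R) T, e k
        ≥ ∑ _k ∈ Finset.Ico (T_D + T_R) T, E_hyst :=
          Finset.sum_le_sum (fun k hk => hsteady k (Finset.mem_Ico.mp hk).1)
      _ = ((T - (T_D + T_R) : ℕ) : ℝ) * E_hyst := by
          rw [Finset.sum_const, Nat.card_Ico, nsmul_eq_mul]
  -- key: T - (T_D+T_R) ≥ ⌈N/(E_hyst-E_convex)⌉₊ ≥ N/(E_hyst-E_convex)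
  have hTS : ⌈N / (E_hyst - E_convex)⌉₊ ≤ T - (T_D + T_R) := by omega
  have hceil : N / (E_hyst - E_convex) ≤ ((T - (T_D + T_R) : ℕ) : ℝ) :=
    le_trans (Nat.le_ceil _) (by exact_mod_cast hTS)
  have hkey : N ≤ ((T - (T_D + T_R) : ℕ) : ℝ) * (E_hyst - E_convex) := by
    rw [div_le_iff₀ hpos] at hceil; linarith
  have hcast : ((T - (T_D + T_R) : ℕ) : ℝ) = (T : ℝ) - (T_D : ℝ) - (T_R : ℝ) := by
    push_cast [Nat.cast_sub h1]
    ring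
  rw [hsplit]
  rw [hcast] at htail hkey
  nlinarith [htail, hkey]
end
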